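/- Fix n ≥ 1. For each ordered pair (i, j) with i ≠ j let R_{ij} : ℝ³ → ℝ be a C¹ function nondecreasing in each argument, for each i let R_i : ℝ² → ℝ be C¹ and nondecreasing in each argument, and let u_1,…,u_n ≥ 0 be constants; assume in addition that every partial derivative of every R_{ij} and every R_i is strictly positive at every point all of whose coordinates are strictly positive. Let x, p, m : [0,∞) → ℝⁿ be differentiable, with x bounded, with x_i(t) > 0, p_i(t) > 0, m_i(t) > 0 for all t ≥ 0 and all i, and satisfying for all t ≥ 0 and all i: x_i'(t) = Σ_{j≠i} ( R_{ji}(x_j(t), p_j(t), m_i(t)) − R_{ij}(x_i(t), p_i(t), m_j(t)) ) + u_i − R_i(x_i(t), p_i(t)), p_i'(t) = x_i'(t), and m_i'(t) = −x_i'(t). If the function t ↦ Σ_{i=1}^n |x_i'(t)| is constant on [0,∞), then x_i'(t) = 0 for all t ≥ 0 and all i. -/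

import Mathlib

open Finset



lemma fderiv_apply3 (G : ℝ × ℝ × ℝ → ℝ) (z : ℝ × ℝ × ℝ)
    (hG : DifferentiableAt ℝ G z) (a b c : ℝ) :
    fderiv ℝ G z (a, b, c) =
      a * deriv (fun a' => G (a', z.2.1, z.2.2)) z.1
      + b * deriv (fun b' => G (z.1, b', z.2.2)) z.2.1
      + c * deriv (fun c' => G (z.1, z.2.1, c')) z.2.2 := by
  have hc1 : HasDerivAt (fun a' : ℝ => ((a', z.2.1, z.2.2) : ℝ × ℝ × ℝ)) (1, 0, 0) z.1 := by
    simpa [Prod.mk_zero_zero] using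
      (hasDerivAt_id z.1).prodMk (hasDerivAt_const z.1 ((z.2.1, z.2.2) : ℝ × ℝ))
  have hc2 : HasDerivAt (fun b' : ℝ => ((z.1, b', z.2.2) : ℝ × ℝ × ℝ)) (0, 1, 0) z.2.1 := by
    simpa using
      (hasDerivAt_const z.2.1 z.1).prodMk ((hasDerivAt_id z.2.1).prodMk (hasDerivAt_const z.2.1 z.2.2))
  have hc3 : HasDerivAt (fun c' : ℝ => ((z.1, z.2.1, c') : ℝ × ℝ × ℝ)) (0, 0, 1) z.2.2 := by
    simpa using
      (hasDerivAt_const z.2.2 z.1).prodMk ((hasDerivAt_const z.2.2 z.2.1).prodMk (hasDerivAt_id z.2.2))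
  have h1 : HasDerivAt (fun a' => G (a', z.2.1, z.2.2)) (fderiv ℝ G z ((1:ℝ), (0:ℝ), (0:ℝ))) z.1 :=
    hG.hasFDerivAt.comp_hasDerivAt z.1 hc1
  have h2 : HasDerivAt (fun b' => G (z.1, b', z.2.2)) (fderiv ℝ G z ((0:ℝ), (1:ℝ), (0:ℝ))) z.2.1 :=
    hG.hasFDerivAt.comp_hasDerivAt z.2.1 hc2
  have h3 : HasDerivAt (fun c' => G (z.1, z.2.1, c')) (fderiv ℝ G z ((0:ℝ), (0:ℝ), (1:ℝ))) z.2.2 :=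
    hG.hasFDerivAt.comp_hasDerivAt z.2.2 hc3
  rw [h1.deriv, h2.deriv, h3.deriv]
  have hdecomp : ((a, b, c) : ℝ × ℝ × ℝ)
      = a • ((1:ℝ), (0:ℝ), (0:ℝ)) + b • ((0:ℝ), (1:ℝ), (0:ℝ)) + c • ((0:ℝ), (0:ℝ), (1:ℝ)) := by
    simp [Prod.ext_iff]
  rw [hdecomp, map_add, map_add, map_smul, map_smul, map_smul]
  simp [smul_eq_mul]

lemma fderiv_apply2 (G : ℝ × ℝ → ℝ) (z : ℝ × ℝ)
    (hG : DifferentiableAt ℝ G z) (a b : ℝ) :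
    fderiv ℝ G z (a, b) =
      a * deriv (fun a' => G (a', z.2)) z.1
      + b * deriv (fun b' => G (z.1, b')) z.2 := by
  have hc1 : HasDerivAt (fun a' : ℝ => ((a', z.2) : ℝ × ℝ)) (1, 0) z.1 := by
    simpa using (hasDerivAt_id z.1).prodMk (hasDerivAt_const z.1 z.2)
  have hc2 : HasDerivAt (fun b' : ℝ => ((z.1, b') : ℝ × ℝ)) (0, 1) z.2 := by
    simpa using (hasDerivAt_const z.2 z.1).prodMk (hasDerivAt_id z.2)
  have h1 : HasDerivAt (fun a' => G (a', z.2)) (fderiv ℝ G z ((1:ℝ), (0:ℝ))) z.1 :=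
    hG.hasFDerivAt.comp_hasDerivAt z.1 hc1
  have h2 : HasDerivAt (fun b' => G (z.1, b')) (fderiv ℝ G z ((0:ℝ), (1:ℝ))) z.2 :=
    hG.hasFDerivAt.comp_hasDerivAt z.2 hc2
  rw [h1.deriv, h2.deriv]
  have hdecomp : ((a, b) : ℝ × ℝ) = a • ((1:ℝ), (0:ℝ)) + b • ((0:ℝ), (1:ℝ)) := by
    simp [Prod.ext_iff]
  rw [hdecomp, map_add, map_smul, map_smul]
  simp [smul_eq_mul]

lemma hasDerivAt_comp3 (G : ℝ → ℝ → ℝ → ℝ)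
    (hG : ContDiff ℝ 1 (fun q : ℝ × ℝ × ℝ => G q.1 q.2.1 q.2.2))
    (f1 f2 f3 : ℝ → ℝ) (t a b c : ℝ)
    (h1 : HasDerivAt f1 a t) (h2 : HasDerivAt f2 b t) (h3 : HasDerivAt f3 c t) :
    HasDerivAt (fun s => G (f1 s) (f2 s) (f3 s))
      (a * deriv (fun a' => G a' (f2 t) (f3 t)) (f1 t)
       + b * deriv (fun b' => G (f1 t) b' (f3 t)) (f2 t)
       + c * deriv (fun c' => G (f1 t) (f2 t) c') (f3 t)) t := by
  set Gc : ℝ × ℝ × ℝ → ℝ := fun q => G q.1 q.2.1 q.2.2 with hGc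
  have hdiff : DifferentiableAt ℝ Gc (f1 t, f2 t, f3 t) :=
    (hG.differentiable one_ne_zero).differentiableAt
  have hcurve : HasDerivAt (fun s => ((f1 s, f2 s, f3 s) : ℝ × ℝ × ℝ)) (a, b, c) t :=
    h1.prodMk (h2.prodMk h3)
  have := hdiff.hasFDerivAt.comp_hasDerivAt t hcurve
  rw [fderiv_apply3 Gc _ hdiff] at this
  exact this

lemma hasDerivAt_comp2 (G : ℝ → ℝ → ℝ)
    (hG : ContDiff ℝ 1 (fun q : ℝ × ℝ => G q.1 q.2))
    (f1 f2 : ℝ → ℝ) (t a b : ℝ)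
    (h1 : HasDerivAt f1 a t) (h2 : HasDerivAt f2 b t) :
    HasDerivAt (fun s => G (f1 s) (f2 s))
      (a * deriv (fun a' => G a' (f2 t)) (f1 t)
       + b * deriv (fun b' => G (f1 t) b') (f2 t)) t := by
  set Gc : ℝ × ℝ → ℝ := fun q => G q.1 q.2 with hGc
  have hdiff : DifferentiableAt ℝ Gc (f1 t, f2 t) :=
    (hG.differentiable one_ne_zero).differentiableAt
  have hcurve : HasDerivAt (fun s => ((f1 s, f2 s) : ℝ × ℝ)) (a, b) t := h1.prodMk h2
  have := hdiff.hasFDerivAt.comp_hasDerivAt t hcurve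
  rw [fderiv_apply2 Gc _ hdiff] at this
  exact this

lemma sign_mul_self'  (r : ℝ) : Real.sign r * r = |r| := by
  rcases lt_trichotomy r 0 with h | h | h
  · rw [Real.sign_of_neg h, abs_of_neg h]; ring
  · simp [h]
  · rw [Real.sign_of_pos h, abs_of_pos h]; ring

lemma abs_sign_le (r : ℝ) : |Real.sign r| ≤ 1 := by
  rcases lt_trichotomy r 0 with h | h | h
  · simp [Real.sign_of_neg h]
  · simp [h]
  · simp [Real.sign_of_pos h]

lemma abs_sign_eq_one (r : ℝ) (h : r ≠ 0) : |Real.sign r| = 1 := by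
  rcases lt_trichotomy r 0 with h' | h' | h'
  · simp [Real.sign_of_neg h']
  · exact absurd h' h
  · simp [Real.sign_of_pos h']

lemma abs_add_mul_le (Yv Dv σv δ : ℝ) (hδ : 0 ≤ δ)
    (hσY : σv * Yv = |Yv|) (hσD : Yv = 0 → σv * Dv = |Dv|)
    (hσabs : Yv ≠ 0 → |σv| = 1)
    (hsmall : Yv ≠ 0 → δ * |Dv| ≤ |Yv|) :
    |Yv + δ * Dv| ≤ |Yv| + δ * (σv * Dv) := by
  rcases eq_or_ne Yv 0 with h | h
  · subst h
    rw [hσD rfl]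
    simp [abs_mul, abs_of_nonneg hδ]
  · have h1 : σv * (Yv + δ * Dv) = |Yv| + δ * (σv * Dv) := by rw [mul_add, hσY]; ring
    have hσ1 := hσabs h
    have hσDv : -|Dv| ≤ σv * Dv := by
      have : |σv * Dv| ≤ |Dv| := by rw [abs_mul, hσ1, one_mul]
      linarith [neg_abs_le (σv * Dv), this]
    have h2 : 0 ≤ |Yv| + δ * (σv * Dv) := by nlinarith [hsmall h]
    calc |Yv + δ * Dv| = |σv| * |Yv + δ * Dv| := by rw [hσ1, one_mul]
      _ = |σv * (Yv + δ * Dv)| := (abs_mul _ _).symm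
      _ = σv * (Yv + δ * Dv) := abs_of_nonneg (by rw [h1]; exact h2)
      _ = _ := h1
      _ ≤ _ := le_rfl


/-- LaSalle principle for a catalyst/dimer modification of a linear network:
along a bounded positive trajectory on `[0, ∞)` on which the Sum-of-Currents
function `V(t) = Σ_i |x_i'(t)|` is constant, necessarily `x' ≡ 0`. -/
theorem lasalle_catalyst_dimer (n : ℕ) (hn : 1 ≤ n)
    (R : Fin n → Fin n → ℝ → ℝ → ℝ → ℝ) (Rout : Fin n → ℝ → ℝ → ℝ) (u : Fin n → ℝ)
    (hRC1 : ∀ i j, i ≠ j →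
      ContDiff ℝ 1 (fun q : ℝ × ℝ × ℝ => R i j q.1 q.2.1 q.2.2))
    (hRmono1 : ∀ i j, i ≠ j → ∀ b c : ℝ, Monotone (fun a => R i j a b c))
    (hRmono2 : ∀ i j, i ≠ j → ∀ a c : ℝ, Monotone (fun b => R i j a b c))
    (hRmono3 : ∀ i j, i ≠ j → ∀ a b : ℝ, Monotone (fun c => R i j a b c))
    (hRoC1 : ∀ i, ContDiff ℝ 1 (fun q : ℝ × ℝ => Rout i q.1 q.2))
    (hRomono1 : ∀ i, ∀ b : ℝ, Monotone (fun a => Rout i a b))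
    (hRomono2 : ∀ i, ∀ a : ℝ, Monotone (fun b => Rout i a b))
    (hu : ∀ i, 0 ≤ u i)
    (hRpos1 : ∀ i j, i ≠ j → ∀ a b c : ℝ, 0 < a → 0 < b → 0 < c →
      0 < deriv (fun a' => R i j a' b c) a)
    (hRpos2 : ∀ i j, i ≠ j → ∀ a b c : ℝ, 0 < a → 0 < b → 0 < c →
      0 < deriv (fun b' => R i j a b' c) b)
    (hRpos3 : ∀ i j, i ≠ j → ∀ a b c : ℝ, 0 < a → 0 < b → 0 < c →
      0 < deriv (fun c' => R i j a b c') c)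
    (hRopos1 : ∀ i, ∀ a b : ℝ, 0 < a → 0 < b →
      0 < deriv (fun a' => Rout i a' b) a)
    (hRopos2 : ∀ i, ∀ a b : ℝ, 0 < a → 0 < b →
      0 < deriv (fun b' => Rout i a b') b)
    (x p m : ℝ → Fin n → ℝ)
    (hx : ∀ i, ∀ t : ℝ, 0 ≤ t → DifferentiableAt ℝ (fun s => x s i) t)
    (hp : ∀ i, ∀ t : ℝ, 0 ≤ t → DifferentiableAt ℝ (fun s => p s i) t)
    (hm : ∀ i, ∀ t : ℝ, 0 ≤ t → DifferentiableAt ℝ (fun s => m s i) t)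
    (hbdd : ∃ C : ℝ, ∀ t : ℝ, 0 ≤ t → ∀ i, |x t i| ≤ C)
    (hxpos : ∀ t : ℝ, 0 ≤ t → ∀ i, 0 < x t i)
    (hppos : ∀ t : ℝ, 0 ≤ t → ∀ i, 0 < p t i)
    (hmpos : ∀ t : ℝ, 0 ≤ t → ∀ i, 0 < m t i)
    (hode : ∀ t : ℝ, 0 ≤ t → ∀ i : Fin n, deriv (fun s => x s i) t =
      (∑ j ∈ Finset.univ.erase i,
        (R j i (x t j) (p t j) (m t i) - R i j (x t i) (p t i) (m t j))) + u i
        - Rout i (x t i) (p t i))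
    (hpode : ∀ t : ℝ, 0 ≤ t → ∀ i : Fin n,
      deriv (fun s => p s i) t = deriv (fun s => x s i) t)
    (hmode : ∀ t : ℝ, 0 ≤ t → ∀ i : Fin n,
      deriv (fun s => m s i) t = -deriv (fun s => x s i) t)
    (hVconst : ∀ s t : ℝ, 0 ≤ s → 0 ≤ t →
      (∑ i : Fin n, |deriv (fun τ => x τ i) s|) =
        ∑ i : Fin n, |deriv (fun τ => x τ i) t|) :
    ∀ t : ℝ, 0 ≤ t → ∀ i : Fin n, deriv (fun s => x s i) t = 0 := by
  by_contra hcon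
  push_neg at hcon
  obtain ⟨t₀, ht₀, i₀, hi₀⟩ := hcon
  have hxp := hxpos t₀ ht₀
  have hpp := hppos t₀ ht₀
  have hmp := hmpos t₀ ht₀
  set Y : Fin n → ℝ := fun i => deriv (fun s => x s i) t₀ with hYdef
  set A : Fin n → Fin n → ℝ := fun a b =>
    deriv (fun a' => R a b a' (p t₀ a) (m t₀ b)) (x t₀ a)
    + deriv (fun b' => R a b (x t₀ a) b' (m t₀ b)) (p t₀ a) with hAdef
  set B : Fin n → Fin n → ℝ := fun a b =>
    deriv (fun c' => R a b (x t₀ a) (p t₀ a) c') (m t₀ b) with hBdef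
  set g : Fin n → ℝ := fun i =>
    deriv (fun a' => Rout i a' (p t₀ i)) (x t₀ i)
    + deriv (fun b' => Rout i (x t₀ i) b') (p t₀ i) with hgdef
  set D : Fin n → ℝ := fun i =>
    (∑ j ∈ univ.erase i, (A j i * Y j - B j i * Y i - (A i j * Y i - B i j * Y j)))
      - g i * Y i with hDdef
  have hApos : ∀ a b, a ≠ b → 0 < A a b := fun a b hab =>
    add_pos (hRpos1 a b hab _ _ _ (hxp a) (hpp a) (hmp b))
            (hRpos2 a b hab _ _ _ (hxp a) (hpp a) (hmp b))
  have hBpos : ∀ a b, a ≠ b → 0 < B a b := fun a b hab =>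
    hRpos3 a b hab _ _ _ (hxp a) (hpp a) (hmp b)
  have hgpos : ∀ i, 0 < g i := fun i =>
    add_pos (hRopos1 i _ _ (hxp i) (hpp i)) (hRopos2 i _ _ (hxp i) (hpp i))
  have hxd : ∀ i, HasDerivAt (fun s => x s i) (Y i) t₀ := fun i => (hx i t₀ ht₀).hasDerivAt
  have hpd : ∀ i, HasDerivAt (fun s => p s i) (Y i) t₀ := by
    intro i
    have h := (hp i t₀ ht₀).hasDerivAt
    rwa [hpode t₀ ht₀ i] at h
  have hmd : ∀ i, HasDerivAt (fun s => m s i) (-(Y i)) t₀ := by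
    intro i
    have h := (hm i t₀ ht₀).hasDerivAt
    rwa [hmode t₀ ht₀ i] at h
  have hDer : ∀ i, HasDerivWithinAt (fun t => deriv (fun s => x s i) t) (D i)
      (Set.Ici t₀) t₀ := by
    intro i
    have hsum : HasDerivAt (fun t => ∑ j ∈ univ.erase i,
        (R j i (x t j) (p t j) (m t i) - R i j (x t i) (p t i) (m t j)))
        (∑ j ∈ univ.erase i, (A j i * Y j - B j i * Y i - (A i j * Y i - B i j * Y j)))
        t₀ := by
      apply HasDerivAt.fun_sum
      intro j hj
      have hji : j ≠ i := Finset.ne_of_mem_erase hj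
      have h1 := hasDerivAt_comp3 (R j i) (hRC1 j i hji) (fun s => x s j) (fun s => p s j)
        (fun s => m s i) t₀ (Y j) (Y j) (-(Y i)) (hxd j) (hpd j) (hmd i)
      have h2 := hasDerivAt_comp3 (R i j) (hRC1 i j hji.symm) (fun s => x s i) (fun s => p s i)
        (fun s => m s j) t₀ (Y i) (Y i) (-(Y j)) (hxd i) (hpd i) (hmd j)
      have h3 := h1.sub h2
      refine h3.congr_deriv ?_
      simp only [hAdef, hBdef]
      ring
    have hro := hasDerivAt_comp2 (Rout i) (hRoC1 i) (fun s => x s i) (fun s => p s i) t₀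
      (Y i) (Y i) (hxd i) (hpd i)
    have hF : HasDerivAt (fun t =>
        (∑ j ∈ univ.erase i, (R j i (x t j) (p t j) (m t i) - R i j (x t i) (p t i) (m t j)))
          + u i - Rout i (x t i) (p t i)) (D i) t₀ := by
      have h4 := (hsum.add_const (u i)).sub hro
      refine h4.congr_deriv ?_
      simp only [hDdef, hgdef]
      ring
    exact hF.hasDerivWithinAt.congr (fun t ht => hode t (le_trans ht₀ ht) i) (hode t₀ ht₀ i)
  set σ : Fin n → ℝ := fun i => if Y i = 0 then Real.sign (D i) else Real.sign (Y i) with hσdef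
  have hσY : ∀ i, σ i * Y i = |Y i| := by
    intro i
    by_cases h : Y i = 0
    · simp [hσdef, h]
    · simp only [hσdef, if_neg h]
      exact sign_mul_self' (Y i)
  have hσD : ∀ i, Y i = 0 → σ i * D i = |D i| := by
    intro i h
    simp only [hσdef, if_pos h]
    exact sign_mul_self' (D i)
  have hσabs : ∀ i, |σ i| ≤ 1 := by
    intro i
    by_cases h : Y i = 0 <;> simp only [hσdef, if_pos, if_neg, h, if_true, if_false] <;>
      first | exact abs_sign_le _ | skip
  have hσabs1 : ∀ i, Y i ≠ 0 → |σ i| = 1 := by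
    intro i h
    simp only [hσdef, if_neg h]
    exact abs_sign_eq_one _ h
  have hterm : ∀ i, σ i * D i =
      (∑ j ∈ univ.erase i, ((A j i + B i j) * (σ i * Y j) - (B j i + A i j) * |Y i|))
        - g i * |Y i| := by
    intro i
    have h1 : σ i * D i = (∑ j ∈ univ.erase i,
        ((A j i + B i j) * (σ i * Y j) - (B j i + A i j) * (σ i * Y i)))
          - g i * (σ i * Y i) := by
      simp only [hDdef]
      rw [mul_sub, Finset.mul_sum]
      congr 1
      · exact Finset.sum_congr rfl (fun j _ => by ring)
      · ring
    rw [h1, hσY i]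
  have hYi₀ : 0 < |Y i₀| := abs_pos.mpr hi₀
  have hkey : ∑ i, σ i * D i ≤ -(g i₀ * |Y i₀|) := by
    have hle : ∀ i, σ i * D i ≤
        (∑ j ∈ univ.erase i, ((A j i + B i j) * |Y j| - (B j i + A i j) * |Y i|))
          - g i * |Y i| := by
      intro i
      rw [hterm i]
      apply sub_le_sub_right
      apply Finset.sum_le_sum
      intro j hj
      have hji : j ≠ i := Finset.ne_of_mem_erase hj
      apply sub_le_sub_right
      apply mul_le_mul_of_nonneg_left _ (le_of_lt (add_pos (hApos j i hji) (hBpos i j hji.symm)))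
      calc σ i * Y j ≤ |σ i * Y j| := le_abs_self _
        _ = |σ i| * |Y j| := abs_mul _ _
        _ ≤ 1 * |Y j| := mul_le_mul_of_nonneg_right (hσabs i) (abs_nonneg _)
        _ = |Y j| := one_mul _
    have hswap : (∑ i, ∑ j ∈ univ.erase i, (A j i + B i j) * |Y j|)
        = ∑ i, ∑ j ∈ univ.erase i, (A i j + B j i) * |Y i| :=
      Finset.sum_comm' (fun a b => by
        simp only [Finset.mem_univ, Finset.mem_erase, true_and, and_true, ne_eq]
        exact ⟨fun hh => hh ∘ Eq.symm, fun hh => hh ∘ Eq.symm⟩)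
    calc ∑ i, σ i * D i
        ≤ ∑ i, ((∑ j ∈ univ.erase i, ((A j i + B i j) * |Y j| - (B j i + A i j) * |Y i|))
            - g i * |Y i|) := Finset.sum_le_sum (fun i _ => hle i)
      _ = (∑ i, ∑ j ∈ univ.erase i, (A j i + B i j) * |Y j|)
            - (∑ i, ∑ j ∈ univ.erase i, (B j i + A i j) * |Y i|)
            - ∑ i, g i * |Y i| := by
          simp only [Finset.sum_sub_distrib]
      _ = - ∑ i, g i * |Y i| := by
          rw [hswap]
          have h2 : (∑ i, ∑ j ∈ univ.erase i, (A i j + B j i) * |Y i|)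
              = ∑ i, ∑ j ∈ univ.erase i, (B j i + A i j) * |Y i| :=
            Finset.sum_congr rfl (fun i _ => Finset.sum_congr rfl (fun j _ => by ring))
          rw [h2]
          ring
      _ ≤ -(g i₀ * |Y i₀|) := by
          apply neg_le_neg
          exact Finset.single_le_sum
            (fun i _ => mul_nonneg (hgpos i).le (abs_nonneg _)) (Finset.mem_univ i₀)
  set ε : ℝ := g i₀ * |Y i₀| / (2 * n) with hεdef
  have hnpos : (0:ℝ) < n := by exact_mod_cast hn
  have hεpos : 0 < ε := by
    apply div_pos (mul_pos (hgpos i₀) hYi₀)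
    positivity
  have hev : ∀ i, ∀ᶠ t in nhdsWithin t₀ (Set.Ioi t₀),
      |deriv (fun s => x s i) t| ≤ |Y i| + (t - t₀) * (σ i * D i + ε) := by
    intro i
    have hlo := Asymptotics.IsLittleO.def (hasDerivWithinAt_iff_isLittleO.mp (hDer i)) hεpos
    have hlo' : ∀ᶠ t in nhdsWithin t₀ (Set.Ioi t₀),
        ‖deriv (fun s => x s i) t - Y i - (t - t₀) • D i‖
          ≤ ε * ‖t - t₀‖ :=
      hlo.filter_mono (nhdsWithin_mono t₀ Set.Ioi_subset_Ici_self)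
    set c : ℝ := if Y i = 0 then 1 else |Y i| / (|D i| + 1) with hcdef
    have hcpos : 0 < c := by
      rw [hcdef]
      split
      · norm_num
      · apply div_pos (abs_pos.mpr (by assumption))
        positivity
    have hnear : ∀ᶠ t in nhdsWithin t₀ (Set.Ioi t₀), |t - t₀| < c := by
      apply Filter.Eventually.filter_mono nhdsWithin_le_nhds
      have hball : Metric.ball t₀ c ∈ nhds t₀ := Metric.ball_mem_nhds t₀ hcpos
      filter_upwards [hball] with t ht
      simpa [Real.dist_eq] using ht
    have hmem : ∀ᶠ t in nhdsWithin t₀ (Set.Ioi t₀), t ∈ Set.Ioi t₀ :=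
      eventually_mem_nhdsWithin
    filter_upwards [hlo', hnear, hmem] with t hA' hB' hC'
    have hδ : 0 < t - t₀ := sub_pos.mpr hC'
    have hnrm : ‖t - t₀‖ = t - t₀ := by rw [Real.norm_eq_abs, abs_of_pos hδ]
    have habs : |deriv (fun s => x s i) t - (Y i + (t - t₀) * D i)| ≤ ε * (t - t₀) := by
      calc |deriv (fun s => x s i) t - (Y i + (t - t₀) * D i)|
          = ‖deriv (fun s => x s i) t - Y i - (t - t₀) • D i‖ := by
            rw [Real.norm_eq_abs, smul_eq_mul]
            congr 1
            ring
        _ ≤ ε * ‖t - t₀‖ := hA'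
        _ = ε * (t - t₀) := by rw [hnrm]
    have hsmall : Y i ≠ 0 → (t - t₀) * |D i| ≤ |Y i| := by
      intro hY0
      have hc : c = |Y i| / (|D i| + 1) := by rw [hcdef, if_neg hY0]
      have h1 : t - t₀ < |Y i| / (|D i| + 1) := by
        rw [← hc]
        calc t - t₀ = |t - t₀| := (abs_of_pos hδ).symm
          _ < c := hB'
      have h2 : (t - t₀) * (|D i| + 1) < |Y i| := (lt_div_iff₀ (by positivity)).mp h1
      linarith [h2, hδ]
    have hmain := abs_add_mul_le (Y i) (D i) (σ i) (t - t₀) hδ.le (hσY i) (hσD i)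
      (hσabs1 i) hsmall
    have htri : |deriv (fun s => x s i) t| ≤ |Y i + (t - t₀) * D i| + ε * (t - t₀) := by
      have h5 := abs_sub_abs_le_abs_sub (deriv (fun s => x s i) t) (Y i + (t - t₀) * D i)
      linarith [habs, h5]
    calc |deriv (fun s => x s i) t| ≤ |Y i + (t - t₀) * D i| + ε * (t - t₀) := htri
      _ ≤ (|Y i| + (t - t₀) * (σ i * D i)) + ε * (t - t₀) := by linarith [hmain]
      _ = |Y i| + (t - t₀) * (σ i * D i + ε) := by ring
  have hall : ∀ᶠ t in nhdsWithin t₀ (Set.Ioi t₀),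
      (∀ i, |deriv (fun s => x s i) t| ≤ |Y i| + (t - t₀) * (σ i * D i + ε))
        ∧ t ∈ Set.Ioi t₀ :=
    (Filter.eventually_all.mpr hev).and eventually_mem_nhdsWithin
  obtain ⟨t, htb, htmem⟩ := hall.exists
  have hδ : 0 < t - t₀ := sub_pos.mpr htmem
  have hVt : (∑ i, |deriv (fun s => x s i) t|) = ∑ i, |Y i| :=
    hVconst t t₀ (le_trans ht₀ (le_of_lt htmem)) ht₀
  have hsumle : (∑ i, |deriv (fun s => x s i) t|)
      ≤ ∑ i, (|Y i| + (t - t₀) * (σ i * D i + ε)) :=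
    Finset.sum_le_sum (fun i _ => htb i)
  rw [hVt] at hsumle
  rw [Finset.sum_add_distrib, ← Finset.mul_sum] at hsumle
  have h6 : (∑ i : Fin n, (σ i * D i + ε)) = (∑ i, σ i * D i) + n * ε := by
    rw [Finset.sum_add_distrib, Finset.sum_const, Finset.card_univ, Fintype.card_fin,
      nsmul_eq_mul]
  rw [h6] at hsumle
  have h7' : 0 ≤ (t - t₀) * ((∑ i, σ i * D i) + n * ε) := by linarith [hsumle]
  have h7 : 0 ≤ (∑ i, σ i * D i) + n * ε := (mul_nonneg_iff_of_pos_left hδ).mp h7'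
  have hnε : (n:ℝ) * ε = g i₀ * |Y i₀| / 2 := by
    rw [hεdef]
    field_simp
  have hG : 0 < g i₀ * |Y i₀| := mul_pos (hgpos i₀) hYi₀
  rw [hnε] at h7
  have hfin : (0:ℝ) ≤ -(g i₀ * |Y i₀|) + g i₀ * |Y i₀| / 2 :=
    le_trans h7 (add_le_add_left hkey _)
  linarith [hfin, hG]
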